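/- Let L/K be a finite Galois extension of fields with Galois group G = Gal(L/K), and let V be an L-vector space equipped with a K-structure (φ_σ)_{σ∈G}. Then the L-linear map L ⊗_K V^G → V sending a ⊗ v to a·v is bijective. -/

import Mathlib

open scoped TensorProduct

/-- **Galois descent.**
Let `L/K` be a finite Galois extension with group `G = Gal(L/K)` and let `V`
be an `L`-vector space equipped with a `K`-structure, i.e. a family
`φ_σ : V → V` (`σ ∈ G`) of `σ`-semilinear additive bijections satisfying the
cocycle condition `φ_σ ∘ φ_τ = φ_{στ}`. Let `V^G = S` be the `K`-subspace of
invariants. Then the `L`-linear map `L ⊗[K] V^G → V`, `a ⊗ v ↦ a • v`, is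
bijective. -/
theorem stmt_1 (K L : Type*) [Field K] [Field L] [Algebra K L]
    [FiniteDimensional K L] [IsGalois K L]
    (V : Type*) [AddCommGroup V] [Module K V] [Module L V] [IsScalarTower K L V]
    (φ : (L ≃ₐ[K] L) → V ≃+ V)
    (hsemi : ∀ (σ : L ≃ₐ[K] L) (a : L) (v : V), φ σ (a • v) = σ a • φ σ v)
    (hcoc : ∀ (σ τ : L ≃ₐ[K] L) (v : V), φ σ (φ τ v) = φ (σ * τ) v)
    (S : Submodule K V) (hS : ∀ v : V, v ∈ S ↔ ∀ σ : L ≃ₐ[K] L, φ σ v = v) :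
    Function.Bijective (LinearMap.liftBaseChange L S.subtype) ∧
    ∀ (a : L) (v : ↥S),
      LinearMap.liftBaseChange L S.subtype (a ⊗ₜ[K] v) = a • (v : V) := by
  classical
  have htmul : ∀ (a : L) (v : ↥S),
      LinearMap.liftBaseChange L S.subtype (a ⊗ₜ[K] v) = a • (v : V) := by
    intro a v; simp
  refine ⟨?_, htmul⟩
  -- φ 1 = id
  have hφ1 : ∀ v : V, φ 1 v = v := by
    intro v
    have := hcoc 1 1 v
    rw [one_mul] at this
    exact (φ 1).injective this
  -- a basis of L/K indexed by G
  have hcard : Fintype.card (L ≃ₐ[K] L) = Module.finrank K L := Nat.card_eq_fintype_card.symm.trans (IsGalois.card_aut_eq_finrank K L)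
  let e : Fin (Module.finrank K L) ≃ (L ≃ₐ[K] L) :=
    Fintype.equivOfCardEq (by simp [hcard])
  let b : Module.Basis (L ≃ₐ[K] L) K L := (Module.finBasis K L).reindex e
  -- linear independence of the automorphisms as K-linear maps
  have hLI : LinearIndependent L (fun σ : L ≃ₐ[K] L => (σ : L →ₐ[K] L).toLinearMap) := by
    refine (linearIndependent_toLinearMap K L L).comp
      (fun σ : L ≃ₐ[K] L => (σ : L →ₐ[K] L)) ?_
    intro σ τ h
    exact AlgEquiv.ext fun x => congrArg (fun f : L →ₐ[K] L => f x) h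
  -- the matrix (σ (b τ)) is invertible
  let M : Matrix (L ≃ₐ[K] L) (L ≃ₐ[K] L) L := fun σ τ => σ (b τ)
  have hMunit : IsUnit M := by
    rw [← Matrix.vecMul_injective_iff_isUnit]
    intro x y hxy
    have hxy' : Matrix.vecMul x M = Matrix.vecMul y M := hxy
    have h0 : ∀ x : (L ≃ₐ[K] L) → L, Matrix.vecMul x M = 0 → x = 0 := by
      intro x hx
      have hsum : (∑ σ : L ≃ₐ[K] L, x σ • (σ : L →ₐ[K] L).toLinearMap) = 0 := by
        apply b.ext
        intro τ
        have := congrFun hx τ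
        simpa [Matrix.vecMul, dotProduct, M, smul_eq_mul] using this
      have := Fintype.linearIndependent_iff.mp hLI x hsum
      funext σ; exact this σ
    have : x - y = 0 := by
      apply h0
      rw [Matrix.sub_vecMul, hxy', sub_self]
    funext σ
    have := congrFun this σ
    simpa [sub_eq_zero] using this
  -- coefficients c with ∑ τ, σ (b τ) * c τ = δ_{σ,1}
  obtain ⟨c, hc⟩ := Matrix.mulVec_surjective_iff_isUnit.mpr hMunit (Pi.single 1 1)
  have hc' : ∀ σ : L ≃ₐ[K] L, (∑ τ : L ≃ₐ[K] L, σ (b τ) * c τ) = if σ = 1 then 1 else 0 := by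
    intro σ
    have := congrFun hc σ
    simpa [Matrix.mulVec, dotProduct, M, Pi.single_apply] using this
  -- the averaging operators
  set P : (L ≃ₐ[K] L) → V → V := fun τ v => ∑ σ : L ≃ₐ[K] L, σ (b τ) • φ σ v with hP
  have hPmem : ∀ (τ : L ≃ₐ[K] L) (v : V), P τ v ∈ S := by
    intro τ v
    rw [hS]
    intro ρ
    rw [hP]
    simp only
    rw [map_sum (φ ρ)]
    rw [← Equiv.sum_comp (Equiv.mulLeft ρ) (fun σ => σ (b τ) • φ σ v)]
    refine Finset.sum_congr rfl fun σ _ => ?_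
    simp only [Equiv.coe_mulLeft]
    rw [hsemi, hcoc]
    rfl
  -- the inverse map
  set F := LinearMap.liftBaseChange L S.subtype with hF
  set R : V → L ⊗[K] ↥S := fun v => ∑ τ : L ≃ₐ[K] L, c τ ⊗ₜ[K] (⟨P τ v, hPmem τ v⟩ : ↥S) with hR
  -- F ∘ R = id
  have hFR : ∀ v : V, F (R v) = v := by
    intro v
    rw [hR]
    simp only [map_sum]
    have : ∀ τ : L ≃ₐ[K] L, F (c τ ⊗ₜ[K] (⟨P τ v, hPmem τ v⟩ : ↥S)) = c τ • P τ v := by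
      intro τ; rw [hF]; exact htmul _ _
    rw [Finset.sum_congr rfl (fun τ _ => this τ)]
    have : (∑ τ : L ≃ₐ[K] L, c τ • P τ v) = ∑ σ : L ≃ₐ[K] L, (∑ τ : L ≃ₐ[K] L, σ (b τ) * c τ) • φ σ v := by
      rw [hP]
      simp only [Finset.smul_sum, Finset.sum_smul]
      rw [Finset.sum_comm]
      refine Finset.sum_congr rfl fun σ _ => Finset.sum_congr rfl fun τ _ => ?_
      rw [smul_smul, mul_comm]
    rw [this]
    rw [Finset.sum_congr rfl (fun σ _ => by rw [hc' σ])]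
    simp only [ite_smul, one_smul, zero_smul]
    rw [Finset.sum_ite_eq' Finset.univ (1 : L ≃ₐ[K] L) (fun σ => φ σ v)]
    simp [hφ1 v]
  -- R ∘ F = id
  have hRadd : ∀ v w : V, R (v + w) = R v + R w := by
    intro v w
    rw [hR]
    simp only
    rw [← Finset.sum_add_distrib]
    refine Finset.sum_congr rfl fun τ _ => ?_
    rw [← TensorProduct.tmul_add]
    congr 1
    apply Subtype.ext
    simp only [Submodule.coe_add]
    rw [hP]
    simp [smul_add, Finset.sum_add_distrib]
  have hRF : ∀ x : L ⊗[K] ↥S, R (F x) = x := by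
    intro x
    induction x using TensorProduct.induction_on with
    | zero =>
      rw [map_zero]
      rw [hR]
      simp only
      have : ∀ τ : L ≃ₐ[K] L, (⟨P τ 0, hPmem τ 0⟩ : ↥S) = 0 := by
        intro τ
        apply Subtype.ext
        show P τ 0 = (0 : V)
        rw [hP]
        simp
      simp [this]
    | tmul a s =>
      have hFa : F (a ⊗ₜ[K] s) = a • (s : V) := htmul a s
      rw [hFa, hR]
      simp only
      -- P τ (a • s) = (∑ σ, σ (b τ * a)) • s
      have hPs : ∀ τ : L ≃ₐ[K] L, P τ (a • (s : V)) = (∑ σ : L ≃ₐ[K] L, σ (b τ * a)) • (s : V) := by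
        intro τ
        rw [hP]
        simp only
        rw [Finset.sum_smul]
        refine Finset.sum_congr rfl fun σ _ => ?_
        rw [hsemi, (hS (s : V)).mp s.2 σ, smul_smul, map_mul]
      -- the trace-like element lies in K
      have hinv : ∀ τ : L ≃ₐ[K] L, ∃ k : K, algebraMap K L k = ∑ σ : L ≃ₐ[K] L, σ (b τ * a) := by
        intro τ
        have hmem : (∑ σ : L ≃ₐ[K] L, σ (b τ * a)) ∈ (⊥ : IntermediateField K L) := by
          have hfix : IntermediateField.fixedField (⊤ : Subgroup (L ≃ₐ[K] L)) = ⊥ :=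
            ((IsGalois.tfae (F := K) (E := L)).out 0 1).mp (inferInstance : IsGalois K L)
          rw [← hfix]
          intro ρ
          show ρ.1 (∑ σ : L ≃ₐ[K] L, σ (b τ * a)) = _
          rw [map_sum]
          rw [← Equiv.sum_comp (Equiv.mulLeft ρ.1) (fun σ => σ (b τ * a))]
          rfl
        exact IntermediateField.mem_bot.mp hmem
      choose k hk using hinv
      have hsub : ∀ τ : L ≃ₐ[K] L, (⟨P τ (a • (s : V)), hPmem τ _⟩ : ↥S) = k τ • s := by
        intro τ
        apply Subtype.ext
        show P τ (a • (s : V)) = k τ • (s : V)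
        rw [hPs τ, ← hk τ, algebraMap_smul]
      rw [Finset.sum_congr rfl (fun τ _ => by rw [hsub τ])]
      have : ∀ τ : L ≃ₐ[K] L, c τ ⊗ₜ[K] (k τ • s) = ((∑ σ : L ≃ₐ[K] L, σ (b τ * a)) * c τ) ⊗ₜ[K] s := by
        intro τ
        rw [TensorProduct.tmul_smul, TensorProduct.smul_tmul', ← hk τ]
        congr 1
        rw [Algebra.smul_def]
      rw [Finset.sum_congr rfl (fun τ _ => this τ)]
      rw [← TensorProduct.sum_tmul]
      congr 1
      have : (∑ τ : L ≃ₐ[K] L, (∑ σ : L ≃ₐ[K] L, σ (b τ * a)) * c τ)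
          = ∑ σ : L ≃ₐ[K] L, σ a * ∑ τ : L ≃ₐ[K] L, σ (b τ) * c τ := by
        simp only [Finset.sum_mul, Finset.mul_sum, map_mul]
        rw [Finset.sum_comm]
        refine Finset.sum_congr rfl fun σ _ => Finset.sum_congr rfl fun τ _ => ?_
        ring
      rw [this]
      rw [Finset.sum_congr rfl (fun σ _ => by rw [hc' σ])]
      simp only [mul_ite, mul_one, mul_zero]
      rw [Finset.sum_ite_eq' Finset.univ (1 : L ≃ₐ[K] L) (fun σ => σ a)]
      simp [AlgEquiv.one_apply]
    | add x y hx hy =>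
      rw [map_add, hRadd, hx, hy]
  exact ⟨Function.LeftInverse.injective hRF, Function.RightInverse.surjective hFR⟩
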